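/- Let G be an inverse semigroup with idempotent set E and let A be the unitization over ℂ of the semigroup algebra MonoidAlgebra ℂ G, with the involution extending g ↦ g*. Let Ẽ := { e₀(1−e₁)⋯(1−e_n) ∈ A : n ≥ 0, e_i ∈ E } \ {0} and G̃ := { g · p ∈ A : g ∈ G, p ∈ Ẽ } \ {0}. Then: (i) the product of any two elements of Ẽ lies in Ẽ ∪ {0}; (ii) the product of any two elements of G̃ lies in G̃ ∪ {0}; (iii) G̃ is closed under the involution of A; and (iv) every t ∈ G̃ satisfies t · t* · t = t. In particular G̃ ∪ {0} is an inverse semigroup under the multiplication and involution of A. -/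

import Mathlib

/-- An inverse semigroup: a semigroup with an involution `g ↦ g*` such that
`g** = g`, `(gh)* = h* g*`, `g g* g = g`, and any two idempotents commute. -/
class InverseSemigroup (G : Type*) extends Semigroup G, Star G where
  star_star : ∀ g : G, star (star g) = g
  star_mul : ∀ g h : G, star (g * h) = star h * star g
  mul_star_mul_self : ∀ g : G, g * star g * g = g
  idem_mul_comm : ∀ e f : G, e * e = e → f * f = f → e * f = f * e

/-- The canonical image of `g : G` in the unitization over `ℂ` of the semigroup
algebra `MonoidAlgebra ℂ G`. -/
noncomputable def sgBasis {G : Type*} [InverseSemigroup G] (g : G) :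
    Unitization ℂ (MonoidAlgebra ℂ G) :=
  Unitization.inr (MonoidAlgebra.single g (1 : ℂ))

/-- The conjugate-linear involution on the unitization of the semigroup algebra
extending `g ↦ g*`. -/
noncomputable def astar {G : Type*} [InverseSemigroup G]
    (x : Unitization ℂ (MonoidAlgebra ℂ G)) : Unitization ℂ (MonoidAlgebra ℂ G) :=
  Unitization.inl (starRingEnd ℂ x.fst) +
    Unitization.inr
      (MonoidAlgebra.ofCoeff (Finsupp.mapDomain (star : G → G)
        (Finsupp.mapRange (starRingEnd ℂ) (map_zero _) x.snd.coeff)))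

/-- The set `Ẽ` of nonzero elements of the form `e₀ (1-e₁) ⋯ (1-eₙ)`, `eᵢ ∈ E`. -/
def tildeEG (G : Type*) [InverseSemigroup G] : Set (Unitization ℂ (MonoidAlgebra ℂ G)) :=
  {p | p ≠ 0 ∧ ∃ (e₀ : G) (es : List G), e₀ * e₀ = e₀ ∧ (∀ e ∈ es, e * e = e) ∧
    p = sgBasis e₀ * (es.map fun e => 1 - sgBasis e).prod}

/-- The set `G̃` of nonzero elements of the form `g p` with `g ∈ G`, `p ∈ Ẽ`. -/
def tildeG (G : Type*) [InverseSemigroup G] : Set (Unitization ℂ (MonoidAlgebra ℂ G)) :=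
  {t | t ≠ 0 ∧ ∃ (g : G) (p : Unitization ℂ (MonoidAlgebra ℂ G)),
    p ∈ tildeEG G ∧ t = sgBasis g * p}

namespace ISG
variable {G : Type*} [InverseSemigroup G]
open InverseSemigroup

abbrev AA (G : Type*) [InverseSemigroup G] := Unitization ℂ (MonoidAlgebra ℂ G)

lemma sgBasis_mul (g h : G) : sgBasis g * sgBasis h = sgBasis (g * h) := by
  rw [sgBasis, sgBasis, sgBasis, ← Unitization.inr_mul]
  congr 1
  exact (MonoidAlgebra.single_mul_single ..).trans (by rw [one_mul])

noncomputable def phi (m : MonoidAlgebra ℂ G) : MonoidAlgebra ℂ G :=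
  MonoidAlgebra.ofCoeff (Finsupp.mapDomain (star : G → G) (Finsupp.mapRange (starRingEnd ℂ) (map_zero _) m.coeff))

lemma phi_add (m n : MonoidAlgebra ℂ G) : phi (m + n) = phi m + phi n := by
  unfold phi
  rw [MonoidAlgebra.coeff_add, Finsupp.mapRange_add (map_add _), Finsupp.mapDomain_add,
    MonoidAlgebra.ofCoeff_add]

lemma phi_zero : phi (0 : MonoidAlgebra ℂ G) = 0 := by
  unfold phi; simp

lemma phi_single (g : G) (c : ℂ) :
    phi (MonoidAlgebra.single g c) = MonoidAlgebra.single (star g) (starRingEnd ℂ c) := by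
  unfold phi
  rw [MonoidAlgebra.coeff_single,
    Finsupp.mapRange_single, Finsupp.mapDomain_single, MonoidAlgebra.ofCoeff_single]

lemma phi_smul (c : ℂ) (m : MonoidAlgebra ℂ G) :
    phi (c • m) = (starRingEnd ℂ c) • phi m := by
  induction m using MonoidAlgebra.induction_linear with
  | zero => simp [phi_zero]
  | add f g hf hg => rw [smul_add, phi_add, hf, hg, phi_add, smul_add]
  | single a b =>
    rw [show c • (MonoidAlgebra.single a b : MonoidAlgebra ℂ G) = MonoidAlgebra.single a (c * b) by
      rw [← MonoidAlgebra.ofCoeff_single, ← MonoidAlgebra.ofCoeff_smul, Finsupp.smul_single]; rfl]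
    rw [phi_single, phi_single, map_mul]
    rw [show ((starRingEnd ℂ c) • (MonoidAlgebra.single (star a) ((starRingEnd ℂ) b)) : MonoidAlgebra ℂ G)
      = MonoidAlgebra.single (star a) ((starRingEnd ℂ c) * (starRingEnd ℂ b)) by
      rw [← MonoidAlgebra.ofCoeff_single, ← MonoidAlgebra.ofCoeff_smul, Finsupp.smul_single]; rfl]

lemma phi_mul (m n : MonoidAlgebra ℂ G) : phi (m * n) = phi n * phi m := by
  induction m using MonoidAlgebra.induction_linear with
  | zero => simp [phi_zero]
  | add f g hf hg => rw [add_mul, phi_add, hf, hg, phi_add, mul_add]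
  | single a b =>
    induction n using MonoidAlgebra.induction_linear with
    | zero => simp [phi_zero]
    | add f g hf hg => rw [mul_add, phi_add, hf, hg, phi_add, add_mul]
    | single a' b' =>
      rw [MonoidAlgebra.single_mul_single, phi_single, phi_single, phi_single,
        MonoidAlgebra.single_mul_single, InverseSemigroup.star_mul, map_mul, mul_comm (starRingEnd ℂ b)]

lemma astar_def (x : AA G) : astar x = Unitization.inl (starRingEnd ℂ x.fst) + Unitization.inr (phi x.snd) := rfl

lemma astar_fst (x : AA G) : (astar x).fst = starRingEnd ℂ x.fst := by
  simp [astar_def]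

lemma astar_snd (x : AA G) : (astar x).snd = phi x.snd := by
  simp [astar_def]

lemma astar_add (x y : AA G) : astar (x + y) = astar x + astar y := by
  rw [astar_def, astar_def, astar_def]
  simp only [Unitization.fst_add, Unitization.snd_add, map_add, phi_add,
    Unitization.inl_add, Unitization.inr_add]
  abel

lemma astar_one : astar (1 : AA G) = 1 := by
  rw [astar_def]
  simp [phi_zero]

lemma astar_sgBasis (g : G) : astar (sgBasis g) = sgBasis (star g) := by
  rw [astar_def, sgBasis, sgBasis]
  simp [phi_single]

lemma astar_mul (x y : AA G) : astar (x * y) = astar y * astar x := by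
  refine Unitization.ext ?_ ?_
  · simp only [astar_fst, Unitization.fst_mul, map_mul, mul_comm]
  · simp only [astar_snd, Unitization.snd_mul, astar_fst, Unitization.fst_mul,
      phi_add, phi_mul, phi_smul]
    abel

lemma astar_zero : astar (0 : AA G) = 0 := by
  rw [astar_def]; simp [phi_zero]

lemma astar_neg (x : AA G) : astar (-x) = - astar x := by
  have h : astar (-x) + astar x = 0 := by rw [← astar_add, neg_add_cancel, astar_zero]
  exact eq_neg_of_add_eq_zero_left h

lemma astar_sub (x y : AA G) : astar (x - y) = astar x - astar y := by
  rw [sub_eq_add_neg, astar_add, astar_neg, sub_eq_add_neg]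

lemma astar_eq_zero {x : AA G} (h : astar x = 0) : x = 0 := by
  have h1 : (starRingEnd ℂ) x.fst = 0 := by rw [← astar_fst, h]; rfl
  have h2 : phi x.snd = 0 := by rw [← astar_snd, h]; rfl
  refine Unitization.ext ?_ ?_
  · simpa using congrArg (starRingEnd ℂ) h1
  · have hinj : Function.Injective (star : G → G) :=
      Function.Involutive.injective InverseSemigroup.star_star
    have h3 : Finsupp.mapRange (starRingEnd ℂ) (map_zero _) x.snd.coeff = 0 :=
      Finsupp.mapDomain_injective hinj (by simpa [phi, Finsupp.mapDomain_zero] using h2)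
    ext a
    have := DFunLike.congr_fun h3 a
    rw [Finsupp.mapRange_apply] at this
    simpa using congrArg (starRingEnd ℂ) this


lemma ss (g : G) : star (star g) = g := star_star g

lemma gsg (g : G) : g * star g * g = g := mul_star_mul_self g

lemma sgs (g : G) : star g * g * star g = star g := by
  have := mul_star_mul_self (star g); rwa [ss] at this

lemma idem_gs (g : G) : (g * star g) * (g * star g) = g * star g := by
  rw [← mul_assoc, gsg]

lemma idem_sg (g : G) : (star g * g) * (star g * g) = star g * g := by
  rw [← mul_assoc, sgs]

lemma idem_mul {e f : G} (he : e * e = e) (hf : f * f = f) : (e * f) * (e * f) = e * f := by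
  calc e * f * (e * f) = e * (f * e) * f := by simp [mul_assoc]
    _ = e * (e * f) * f := by rw [idem_mul_comm f e hf he]
    _ = (e * e) * (f * f) := by simp [mul_assoc]
    _ = e * f := by rw [he, hf]

lemma conj_idem (g : G) {e : G} (he : e * e = e) :
    (star g * e * g) * (star g * e * g) = star g * e * g := by
  calc star g * e * g * (star g * e * g)
      = star g * (e * (g * star g) * e) * g := by simp [mul_assoc]
    _ = star g * ((g * star g) * (e * e)) * g := by
        rw [idem_mul_comm e (g * star g) he (idem_gs g)]; simp [mul_assoc]
    _ = star g * (g * star g) * e * g := by rw [he, ← mul_assoc]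
    _ = star g * e * g := by rw [← mul_assoc, sgs]

lemma conj_idem' (g : G) {e : G} (he : e * e = e) :
    (g * e * star g) * (g * e * star g) = g * e * star g := by
  have := conj_idem (star g) he; rwa [ss] at this

lemma idem_mul_eq {e : G} (he : e * e = e) (g : G) : e * g = g * (star g * e * g) := by
  symm
  calc g * (star g * e * g) = (g * star g) * e * g := by simp [mul_assoc]
    _ = e * (g * star g) * g := by rw [idem_mul_comm (g * star g) e (idem_gs g) he]
    _ = e * g := by rw [mul_assoc, mul_assoc, ← mul_assoc g, gsg]

lemma inverse_unique (a x y : G) (h1 : a * x * a = a) (h2 : x * a * x = x)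
    (h3 : a * y * a = a) (h4 : y * a * y = y) : x = y := by
  have hxa : (x * a) * (x * a) = x * a := by rw [← mul_assoc, h2]
  have hya : (y * a) * (y * a) = y * a := by rw [← mul_assoc, h4]
  have hax : (a * x) * (a * x) = a * x := by
    rw [← mul_assoc, mul_assoc a x a, ← mul_assoc, h1]
  have hay : (a * y) * (a * y) = a * y := by
    rw [← mul_assoc, mul_assoc a y a, ← mul_assoc, h3]
  have hx : x = y * a * x := by
    calc x = x * a * x := h2.symm
      _ = (x * (a * y * a)) * x := by rw [h3]
      _ = ((x * a) * (y * a)) * x := by simp [mul_assoc]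
      _ = ((y * a) * (x * a)) * x := by rw [idem_mul_comm _ _ hxa hya]
      _ = y * a * (x * a * x) := by simp [mul_assoc]
      _ = y * a * x := by rw [h2]
  have hy : y = y * a * x := by
    calc y = y * a * y := h4.symm
      _ = y * ((a * x * a) * y) := by rw [h1, ← mul_assoc]
      _ = y * ((a * x) * (a * y)) := by simp [mul_assoc]
      _ = y * ((a * y) * (a * x)) := by rw [idem_mul_comm _ _ hax hay]
      _ = (y * a * y) * (a * x) := by simp [mul_assoc]
      _ = y * a * x := by rw [h4, mul_assoc]
  rw [hx, ← hy]

lemma idem_star {e : G} (he : e * e = e) : star e = e := by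
  refine inverse_unique e (star e) e (gsg e) (sgs e) ?_ ?_ <;> rw [he, he]

/-! ### products of idempotent factors -/

noncomputable def P (es : List G) : AA G := (es.map fun e => 1 - sgBasis e).prod

noncomputable def EP (e₀ : G) (es : List G) : AA G := sgBasis e₀ * P es

lemma P_nil : P ([] : List G) = 1 := by simp [P]

lemma P_cons (e : G) (es : List G) : P (e :: es) = (1 - sgBasis e) * P es := by
  simp [P]

lemma sg_idem_sq {e : G} (he : e * e = e) : sgBasis e * sgBasis e = sgBasis e := by
  rw [sgBasis_mul, he]

lemma one_sub_sq {e : G} (he : e * e = e) :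
    (1 - sgBasis e) * (1 - sgBasis e) = 1 - sgBasis e := by
  rw [sub_mul, one_mul, mul_sub, mul_one, sg_idem_sq he, sub_self, sub_zero]

lemma one_sub_comm {e f : G} (he : e * e = e) (hf : f * f = f) :
    sgBasis f * (1 - sgBasis e) = (1 - sgBasis e) * sgBasis f := by
  rw [mul_sub, sub_mul, one_mul, mul_one, sgBasis_mul, sgBasis_mul, idem_mul_comm f e hf he]

lemma sg_comm_P {f : G} (hf : f * f = f) {es : List G} (hes : ∀ e ∈ es, e * e = e) :
    sgBasis f * P es = P es * sgBasis f := by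
  induction es with
  | nil => rw [P_nil, one_mul, mul_one]
  | cons e es ih =>
    have he := hes e List.mem_cons_self
    have hes' : ∀ e ∈ es, e * e = e := fun e h => hes e (List.mem_cons_of_mem _ h)
    rw [P_cons, ← mul_assoc, one_sub_comm he hf, mul_assoc, ih hes', ← mul_assoc]

lemma one_sub_comm_P {f : G} (hf : f * f = f) {es : List G} (hes : ∀ e ∈ es, e * e = e) :
    (1 - sgBasis f) * P es = P es * (1 - sgBasis f) := by
  rw [sub_mul, mul_sub, one_mul, mul_one, sg_comm_P hf hes]

lemma P_comm {l m : List G} (hl : ∀ e ∈ l, e * e = e) (hm : ∀ e ∈ m, e * e = e) :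
    P l * P m = P m * P l := by
  induction l with
  | nil => rw [P_nil, one_mul, mul_one]
  | cons e es ih =>
    have he := hl e List.mem_cons_self
    have hl' : ∀ x ∈ es, x * x = x := fun x h => hl x (List.mem_cons_of_mem _ h)
    rw [P_cons, mul_assoc, ih hl', ← mul_assoc, one_sub_comm_P he hm, mul_assoc]

lemma P_sq {l : List G} (hl : ∀ e ∈ l, e * e = e) : P l * P l = P l := by
  induction l with
  | nil => rw [P_nil, one_mul]
  | cons e es ih =>
    have he := hl e List.mem_cons_self
    have hl' : ∀ x ∈ es, x * x = x := fun x h => hl x (List.mem_cons_of_mem _ h)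
    calc P (e :: es) * P (e :: es)
        = (1 - sgBasis e) * ((P es * (1 - sgBasis e)) * P es) := by
          rw [P_cons]; simp [mul_assoc]
      _ = (1 - sgBasis e) * (((1 - sgBasis e) * P es) * P es) := by
          rw [one_sub_comm_P he hl']
      _ = ((1 - sgBasis e) * (1 - sgBasis e)) * (P es * P es) := by simp [mul_assoc]
      _ = P (e :: es) := by rw [one_sub_sq he, ih hl', P_cons]

lemma P_append (l m : List G) : P (l ++ m) = P l * P m := by
  simp [P]

/-! ### E-forms -/

def isEForm (p : AA G) : Prop :=
  ∃ (e₀ : G) (es : List G), e₀ * e₀ = e₀ ∧ (∀ e ∈ es, e * e = e) ∧ p = EP e₀ es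

lemma EForm_mul {p q : AA G} (hp : isEForm p) (hq : isEForm q) : isEForm (p * q) := by
  obtain ⟨e₀, es, he₀, hes, rfl⟩ := hp
  obtain ⟨f₀, fs, hf₀, hfs, rfl⟩ := hq
  refine ⟨e₀ * f₀, es ++ fs, idem_mul he₀ hf₀, ?_, ?_⟩
  · intro e he
    rcases List.mem_append.mp he with h | h
    · exact hes e h
    · exact hfs e h
  · unfold EP
    calc sgBasis e₀ * P es * (sgBasis f₀ * P fs)
        = sgBasis e₀ * ((P es * sgBasis f₀) * P fs) := by simp [mul_assoc]
      _ = sgBasis e₀ * ((sgBasis f₀ * P es) * P fs) := by rw [sg_comm_P hf₀ hes]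
      _ = (sgBasis e₀ * sgBasis f₀) * (P es * P fs) := by simp [mul_assoc]
      _ = sgBasis (e₀ * f₀) * P (es ++ fs) := by rw [sgBasis_mul, P_append]

lemma EForm_comm {p q : AA G} (hp : isEForm p) (hq : isEForm q) : p * q = q * p := by
  obtain ⟨e₀, es, he₀, hes, rfl⟩ := hp
  obtain ⟨f₀, fs, hf₀, hfs, rfl⟩ := hq
  unfold EP
  calc sgBasis e₀ * P es * (sgBasis f₀ * P fs)
      = sgBasis e₀ * ((P es * sgBasis f₀) * P fs) := by simp [mul_assoc]
    _ = sgBasis e₀ * ((sgBasis f₀ * P es) * P fs) := by rw [sg_comm_P hf₀ hes]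
    _ = (sgBasis e₀ * sgBasis f₀) * (P es * P fs) := by simp [mul_assoc]
    _ = (sgBasis f₀ * sgBasis e₀) * (P fs * P es) := by
        rw [sgBasis_mul, sgBasis_mul, idem_mul_comm e₀ f₀ he₀ hf₀, P_comm hes hfs]
    _ = sgBasis f₀ * ((sgBasis e₀ * P fs) * P es) := by simp [mul_assoc]
    _ = sgBasis f₀ * ((P fs * sgBasis e₀) * P es) := by rw [sg_comm_P he₀ hfs]
    _ = sgBasis f₀ * P fs * (sgBasis e₀ * P es) := by simp [mul_assoc]

lemma EForm_sq {p : AA G} (hp : isEForm p) : p * p = p := by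
  obtain ⟨e₀, es, he₀, hes, rfl⟩ := hp
  unfold EP
  calc sgBasis e₀ * P es * (sgBasis e₀ * P es)
      = sgBasis e₀ * ((P es * sgBasis e₀) * P es) := by simp [mul_assoc]
    _ = sgBasis e₀ * ((sgBasis e₀ * P es) * P es) := by rw [sg_comm_P he₀ hes]
    _ = (sgBasis e₀ * sgBasis e₀) * (P es * P es) := by simp [mul_assoc]
    _ = sgBasis e₀ * P es := by rw [sg_idem_sq he₀, P_sq hes]

lemma sg_comm_EForm {f : G} (hf : f * f = f) {p : AA G} (hp : isEForm p) :
    sgBasis f * p = p * sgBasis f := by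
  obtain ⟨e₀, es, he₀, hes, rfl⟩ := hp
  unfold EP
  calc sgBasis f * (sgBasis e₀ * P es)
      = (sgBasis f * sgBasis e₀) * P es := by rw [mul_assoc]
    _ = (sgBasis e₀ * sgBasis f) * P es := by
        rw [sgBasis_mul, sgBasis_mul, idem_mul_comm f e₀ hf he₀]
    _ = sgBasis e₀ * (sgBasis f * P es) := by rw [mul_assoc]
    _ = sgBasis e₀ * (P es * sgBasis f) := by rw [sg_comm_P hf hes]
    _ = sgBasis e₀ * P es * sgBasis f := by rw [mul_assoc]

lemma sg_idem_mul_EForm {a : G} (ha : a * a = a) {p : AA G} (hp : isEForm p) :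
    isEForm (sgBasis a * p) := by
  obtain ⟨e₀, es, he₀, hes, rfl⟩ := hp
  exact ⟨a * e₀, es, idem_mul ha he₀, hes, by rw [EP, EP, ← mul_assoc, sgBasis_mul]⟩

/-- moving a basis element from the right of an E-form to the left -/
lemma EForm_mul_sg {p : AA G} (hp : isEForm p) (h : G) :
    ∃ p' : AA G, isEForm p' ∧ p * sgBasis h = sgBasis h * p' := by
  obtain ⟨e₀, es, he₀, hes, rfl⟩ := hp
  have key : ∀ (l : List G), (∀ e ∈ l, e * e = e) →
      P l * sgBasis h = sgBasis h * P (l.map fun e => star h * e * h) := by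
    intro l hl
    induction l with
    | nil => rw [P_nil, List.map_nil, P_nil, one_mul, mul_one]
    | cons e es ih =>
      have he := hl e List.mem_cons_self
      have hl' : ∀ x ∈ es, x * x = x := fun x hx => hl x (List.mem_cons_of_mem _ hx)
      have hfac : (1 - sgBasis e) * sgBasis h = sgBasis h * (1 - sgBasis (star h * e * h)) := by
        rw [sub_mul, one_mul, mul_sub, mul_one, sgBasis_mul, sgBasis_mul,
          idem_mul_eq he h, mul_assoc]
      rw [P_cons, List.map_cons, P_cons, mul_assoc, ih hl', ← mul_assoc, hfac, mul_assoc]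
  refine ⟨EP (star h * e₀ * h) (es.map fun e => star h * e * h),
    ⟨star h * e₀ * h, _, conj_idem h he₀, ?_, rfl⟩, ?_⟩
  · intro e he
    obtain ⟨x, hx, rfl⟩ := List.mem_map.mp he
    exact conj_idem h (hes x hx)
  · unfold EP
    calc sgBasis e₀ * P es * sgBasis h
        = sgBasis e₀ * (P es * sgBasis h) := by rw [mul_assoc]
      _ = sgBasis e₀ * (sgBasis h * P (es.map fun e => star h * e * h)) := by rw [key es hes]
      _ = (sgBasis e₀ * sgBasis h) * P (es.map fun e => star h * e * h) := by rw [mul_assoc]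
      _ = (sgBasis h * sgBasis (star h * e₀ * h)) * P (es.map fun e => star h * e * h) := by
          rw [sgBasis_mul, sgBasis_mul, idem_mul_eq he₀ h, mul_assoc]
      _ = sgBasis h * (sgBasis (star h * e₀ * h) * P (es.map fun e => star h * e * h)) := by
          rw [mul_assoc]

lemma astar_EForm {p : AA G} (hp : isEForm p) : astar p = p := by
  obtain ⟨e₀, es, he₀, hes, rfl⟩ := hp
  have key : ∀ (l : List G), (∀ e ∈ l, e * e = e) → astar (P l) = P l := by
    intro l hl
    induction l with
    | nil => rw [P_nil, astar_one]
    | cons e es ih =>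
      have he := hl e List.mem_cons_self
      have hl' : ∀ x ∈ es, x * x = x := fun x hx => hl x (List.mem_cons_of_mem _ hx)
      rw [P_cons, astar_mul, ih hl', astar_sub, astar_one, astar_sgBasis, idem_star he,
        one_sub_comm_P he hl']
  rw [EP, astar_mul, key es hes, astar_sgBasis, idem_star he₀, sg_comm_P he₀ hes]


/-! ### relating to the sets in the statement -/

lemma mem_tildeEG_iff {p : AA G} : p ∈ tildeEG G ↔ p ≠ 0 ∧ isEForm p := Iff.rfl

lemma mem_tildeG_iff {t : AA G} :
    t ∈ tildeG G ↔ t ≠ 0 ∧ ∃ (g : G) (p : AA G), (p ≠ 0 ∧ isEForm p) ∧ t = sgBasis g * p :=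
  Iff.rfl

lemma astar_decomp {g : G} {p : AA G} (hpE : isEForm p) :
    astar (sgBasis g * p) = p * sgBasis (star g) := by
  rw [astar_mul, astar_EForm hpE, astar_sgBasis]

lemma ttt_lemma : ∀ t ∈ tildeG G, t * astar t * t = t := by
  rintro t ht
  obtain ⟨ht0, g, p, hpmem, rfl⟩ := mem_tildeG_iff.mp ht
  obtain ⟨hp0, hpE⟩ := hpmem
  rw [astar_decomp hpE]
  calc sgBasis g * p * (p * sgBasis (star g)) * (sgBasis g * p)
      = sgBasis g * ((p * p) * ((sgBasis (star g) * sgBasis g) * p)) := by simp [mul_assoc]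
    _ = sgBasis g * (p * (sgBasis (star g * g) * p)) := by rw [EForm_sq hpE, sgBasis_mul]
    _ = sgBasis g * (p * (p * sgBasis (star g * g))) := by rw [sg_comm_EForm (idem_sg g) hpE]
    _ = sgBasis g * ((p * p) * sgBasis (star g * g)) := by simp [mul_assoc]
    _ = sgBasis g * (p * sgBasis (star g * g)) := by rw [EForm_sq hpE]
    _ = sgBasis g * (sgBasis (star g * g) * p) := by rw [sg_comm_EForm (idem_sg g) hpE]
    _ = (sgBasis g * sgBasis (star g * g)) * p := by rw [mul_assoc]
    _ = sgBasis g * p := by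
        rw [sgBasis_mul, show g * (star g * g) = g by rw [← mul_assoc, gsg]]

lemma idem_EForm {s : AA G} (hs : s ∈ tildeG G) (hs2 : s * s = s) : isEForm s := by
  have httt := ttt_lemma s hs
  obtain ⟨hs0, g, p, hpmem, hseq⟩ := mem_tildeG_iff.mp hs
  obtain ⟨hp0, hpE⟩ := hpmem
  have hstar : astar s = p * sgBasis (star g) := by rw [hseq, astar_decomp hpE]
  have hA : isEForm (s * astar s) := by
    have heq : s * astar s = sgBasis g * (p * sgBasis (star g)) := by
      rw [hstar, hseq]
      calc sgBasis g * p * (p * sgBasis (star g))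
          = sgBasis g * ((p * p) * sgBasis (star g)) := by simp [mul_assoc]
        _ = sgBasis g * (p * sgBasis (star g)) := by rw [EForm_sq hpE]
    obtain ⟨p', hp', hmove⟩ := EForm_mul_sg hpE (star g)
    rw [heq, hmove, ← mul_assoc, sgBasis_mul]
    exact sg_idem_mul_EForm (idem_gs g) hp'
  have hB : isEForm (astar s * s) := by
    have heq : astar s * s = p * (sgBasis (star g * g) * p) := by
      rw [hstar, hseq]
      calc p * sgBasis (star g) * (sgBasis g * p)
          = p * ((sgBasis (star g) * sgBasis g) * p) := by simp [mul_assoc]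
        _ = p * (sgBasis (star g * g) * p) := by rw [sgBasis_mul]
    rw [heq]
    exact EForm_mul hpE (sg_idem_mul_EForm (idem_sg g) hpE)
  have hss : astar s * astar s = astar s := by rw [← astar_mul, hs2]
  have hdecomp : s = (s * astar s) * (astar s * s) := by
    symm
    calc (s * astar s) * (astar s * s) = s * ((astar s * astar s) * s) := by simp [mul_assoc]
      _ = s * astar s * s := by rw [hss, mul_assoc]
      _ = s := httt
  rw [hdecomp]
  exact EForm_mul hA hB

end ISG

/-- `Ẽ` and `G̃` are closed under multiplication up to `0`, `G̃` is closed under the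
involution, every `t ∈ G̃` satisfies `t t* t = t`, and any two idempotents of `G̃`
commute; in particular `G̃ ∪ {0}` is an inverse semigroup under the multiplication and
involution of the unitization of the semigroup algebra. -/


theorem stmt_18 {G : Type*} [InverseSemigroup G] :
    (∀ p ∈ tildeEG G, ∀ q ∈ tildeEG G, p * q ∈ tildeEG G ∪ {0}) ∧
    (∀ s ∈ tildeG G, ∀ t ∈ tildeG G, s * t ∈ tildeG G ∪ {0}) ∧
    (∀ t ∈ tildeG G, astar t ∈ tildeG G) ∧
    (∀ t ∈ tildeG G, t * astar t * t = t) ∧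
    (∀ s ∈ tildeG G, ∀ t ∈ tildeG G, s * s = s → t * t = t → s * t = t * s) := by
  open ISG in
  refine ⟨?_, ?_, ?_, ttt_lemma, ?_⟩
  · -- (i)
    intro p hp q hq
    obtain ⟨hp0, hpE⟩ := mem_tildeEG_iff.mp hp
    obtain ⟨hq0, hqE⟩ := mem_tildeEG_iff.mp hq
    by_cases hz : p * q = 0
    · exact Or.inr hz
    · exact Or.inl (mem_tildeEG_iff.mpr ⟨hz, EForm_mul hpE hqE⟩)
  · -- (ii)
    intro s hs t ht
    obtain ⟨hs0, g, p, ⟨hp0, hpE⟩, rfl⟩ := mem_tildeG_iff.mp hs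
    obtain ⟨ht0, h, q, ⟨hq0, hqE⟩, rfl⟩ := mem_tildeG_iff.mp ht
    obtain ⟨p', hp', hmove⟩ := EForm_mul_sg hpE h
    have key : (sgBasis g * p) * (sgBasis h * q) = sgBasis (g * h) * (p' * q) := by
      calc (sgBasis g * p) * (sgBasis h * q)
          = sgBasis g * ((p * sgBasis h) * q) := by simp [mul_assoc]
        _ = sgBasis g * ((sgBasis h * p') * q) := by rw [hmove]
        _ = (sgBasis g * sgBasis h) * (p' * q) := by simp [mul_assoc]
        _ = sgBasis (g * h) * (p' * q) := by rw [sgBasis_mul]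
    by_cases hz : (sgBasis g * p) * (sgBasis h * q) = 0
    · exact Or.inr hz
    · refine Or.inl (mem_tildeG_iff.mpr ⟨hz, g * h, p' * q, ⟨?_, EForm_mul hp' hqE⟩, key⟩)
      intro h0
      exact hz (by rw [key, h0, mul_zero])
  · -- (iii)
    intro t ht
    obtain ⟨ht0, g, p, ⟨hp0, hpE⟩, rfl⟩ := mem_tildeG_iff.mp ht
    obtain ⟨p', hp', hmove⟩ := EForm_mul_sg hpE (star g)
    have key : astar (sgBasis g * p) = sgBasis (star g) * p' := by
      rw [astar_decomp hpE, hmove]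
    have hne : astar (sgBasis g * p) ≠ 0 := fun h0 => ht0 (astar_eq_zero h0)
    refine mem_tildeG_iff.mpr ⟨hne, star g, p', ⟨?_, hp'⟩, key⟩
    intro h0
    exact hne (by rw [key, h0, mul_zero])
  · -- (v)
    intro s hs t ht hs2 ht2
    exact EForm_comm (idem_EForm hs hs2) (idem_EForm ht ht2)
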